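/- Let σ : (0,∞) → [0,∞) be nonincreasing and integrable, c > 0, and A : {(x,y) : 0 ≤ x ≤ y} → ℝ measurable with |A(x,y)| ≤ c·σ((x+y)/2) for all y ≥ x ≥ 0. Then there exists x₀ ≥ 0 such that for every x ≥ x₀, namely whenever 2c ∫_x^∞ σ(t) dt < 1, and every g ∈ L¹(2x,∞), the equation F(z) + ∫_z^∞ A(x, v+x−z) F(v) dv = g(z) for almost every z ≥ 2x has exactly one solution F ∈ L¹(2x,∞). -/

import Mathlib

open MeasureTheory Set Filter
open scoped ENNReal NNReal

/-- The Marchenko-type integral operator `(B f)(z) = ∫_z^∞ A(x, v+x−z) f(v) dv`,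
written with an `if` so that it is defined as one integral w.r.t. a fixed measure. -/
noncomputable def Bop (A : ℝ → ℝ → ℝ) (x : ℝ) (μ : Measure ℝ) (f : ℝ → ℝ) : ℝ → ℝ :=
  fun z => ∫ v, (if z < v then A x (v + x - z) * f v else 0) ∂μ

/-- The associated kernel on the product space. -/
noncomputable def Gker (A : ℝ → ℝ → ℝ) (x : ℝ) (f : ℝ → ℝ) : ℝ × ℝ → ℝ :=
  fun p => if p.1 < p.2 then A x (p.2 + x - p.1) * f p.2 else 0

lemma A_to_F_core
    (σ : ℝ → ℝ) (hσnn : ∀ t > (0 : ℝ), 0 ≤ σ t)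
    (hσint : IntegrableOn σ (Set.Ioi 0))
    (c : ℝ) (hc : 0 < c)
    (A : ℝ → ℝ → ℝ) (hAmeas : Measurable (Function.uncurry A))
    (hAbound : ∀ x y : ℝ, 0 ≤ x → x ≤ y → |A x y| ≤ c * σ ((x + y) / 2))
    (x : ℝ) (hx : 0 ≤ x)
    (hk1 : 2 * c * (∫ t in Set.Ioi x, σ t) < 1) :
    ∀ g : ℝ → ℝ, IntegrableOn g (Set.Ioi (2 * x)) →
      ∃ F : ℝ → ℝ, IntegrableOn F (Set.Ioi (2 * x)) ∧
        (∀ᵐ z ∂(volume.restrict (Set.Ioi (2 * x))),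
          F z + ∫ v in Set.Ioi z, A x (v + x - z) * F v = g z) ∧
        ∀ F' : ℝ → ℝ, IntegrableOn F' (Set.Ioi (2 * x)) →
          (∀ᵐ z ∂(volume.restrict (Set.Ioi (2 * x))),
            F' z + ∫ v in Set.Ioi z, A x (v + x - z) * F' v = g z) →
          F' =ᵐ[volume.restrict (Set.Ioi (2 * x))] F := by
  intro g hg
  set μ : Measure ℝ := volume.restrict (Set.Ioi (2 * x)) with hμ
  set k : ℝ := 2 * c * (∫ t in Set.Ioi x, σ t) with hkdef
  have htail_nn : 0 ≤ ∫ t in Set.Ioi x, σ t :=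
    setIntegral_nonneg measurableSet_Ioi (fun t ht => hσnn t (lt_of_le_of_lt hx ht))
  have hknn : 0 ≤ k := by positivity
  have hσx : IntegrableOn σ (Set.Ioi x) := hσint.mono_set (Set.Ioi_subset_Ioi hx)
  -- the basic kernel-tail estimate
  have tailb : ∀ v : ℝ,
      (∫⁻ z, (if z < v then ENNReal.ofReal (c * σ ((v + 2*x - z)/2)) else 0) ∂μ)
        ≤ ENNReal.ofReal k := by
    intro v
    have hind : (fun z => if z < v then ENNReal.ofReal (c * σ ((v + 2*x - z)/2)) else 0)
        = (Set.Iio v).indicator (fun z => ENNReal.ofReal (c * σ ((v + 2*x - z)/2))) := by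
      funext z; by_cases h : z < v <;> simp [Set.indicator_apply, Set.mem_Iio, h]
    rw [hind, lintegral_indicator measurableSet_Iio, hμ,
      Measure.restrict_restrict measurableSet_Iio, Set.Iio_inter_Ioi]
    rcases le_or_gt v (2 * x) with hv | hv
    · rw [Set.Ioo_eq_empty (not_lt.2 hv)]
      simp
    · have hxv : x < v / 2 := by linarith
      have i1 : IntervalIntegrable σ volume x (v/2) := by
        rw [intervalIntegrable_iff_integrableOn_Ioc_of_le hxv.le]
        exact hσint.mono_set (fun t ht => lt_of_le_of_lt hx ht.1)
      have i2 : IntervalIntegrable (fun u => σ (u/2)) volume (2*x) v := by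
        have h := i1.comp_mul_left (c := 2⁻¹)
        simp only [inv_mul_eq_div] at h
        have e1 : x / (2:ℝ)⁻¹ = 2*x := by field_simp
        have e2 : (v/2) / (2:ℝ)⁻¹ = v := by field_simp
        rwa [e1, e2] at h
      have i3 : IntervalIntegrable (fun z => σ ((v + 2*x - z)/2)) volume (2*x) v := by
        have h := (i2.comp_sub_left (v + 2*x)).symm
        rw [show v + 2*x - 2*x = v by ring, show v + 2*x - v = 2*x by ring] at h
        exact h
      have i4 : IntegrableOn (fun z => c * σ ((v + 2*x - z)/2)) (Set.Ioo (2*x) v) := by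
        have h := i3.const_mul c
        rw [intervalIntegrable_iff_integrableOn_Ioc_of_le hv.le] at h
        exact h.mono_set Set.Ioo_subset_Ioc_self
      have hnn : 0 ≤ᵐ[volume.restrict (Set.Ioo (2*x) v)]
          (fun z => c * σ ((v + 2*x - z)/2)) := by
        refine (ae_restrict_iff' measurableSet_Ioo).2 (ae_of_all _ (fun z hz => ?_))
        have hpos : 0 < (v + 2*x - z)/2 := by
          have := hz.2; have := hz.1; linarith
        exact mul_nonneg hc.le (hσnn _ hpos)
      rw [← ofReal_integral_eq_lintegral_ofReal i4 hnn]
      refine ENNReal.ofReal_le_ofReal ?_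
      have e0 : ∫ z in Set.Ioo (2*x) v, c * σ ((v + 2*x - z)/2)
          = ∫ z in (2*x)..v, c * σ ((v + 2*x - z)/2) := by
        rw [intervalIntegral.integral_of_le hv.le, integral_Ioc_eq_integral_Ioo]
      have e1 : ∫ z in (2*x)..v, c * σ ((v + 2*x - z)/2)
          = c * ∫ z in (2*x)..v, σ ((v + 2*x - z)/2) :=
        intervalIntegral.integral_const_mul _ _
      have e2 : ∫ z in (2*x)..v, σ ((v + 2*x - z)/2) = ∫ u in (2*x)..v, σ (u/2) := by
        have h := intervalIntegral.integral_comp_sub_left (a := 2*x) (b := v)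
          (fun u => σ (u/2)) (v + 2*x)
        rw [show v + 2*x - v = 2*x by ring, show v + 2*x - 2*x = v by ring] at h
        exact h
      have e3 : ∫ u in (2*x)..v, σ (u/2) = 2 * ∫ t in x..(v/2), σ t := by
        have h := intervalIntegral.integral_comp_div (a := 2*x) (b := v) (c := 2) σ
          (by norm_num)
        rw [show (2*x)/2 = x by ring] at h
        rw [h]; simp [smul_eq_mul]
      have e4 : ∫ t in x..(v/2), σ t ≤ ∫ t in Set.Ioi x, σ t := by
        rw [intervalIntegral.integral_of_le hxv.le]
        refine setIntegral_mono_set hσx ?_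
          (HasSubset.Subset.eventuallyLE Set.Ioc_subset_Ioi_self)
        exact (ae_restrict_iff' measurableSet_Ioi).2
          (ae_of_all _ fun t ht => hσnn t (lt_of_le_of_lt hx ht))
      rw [e0, e1, e2, e3, hkdef]
      nlinarith [hc.le, e4]
  -- measurability of the kernel
  have hKm : Measurable (fun p : ℝ × ℝ => A x (p.2 + x - p.1)) := by
    have h1 : Measurable (fun p : ℝ × ℝ => (x, p.2 + x - p.1)) :=
      measurable_const.prodMk ((measurable_snd.add_const x).sub measurable_fst)
    exact hAmeas.comp h1
  -- the key estimate for the operator `Bop`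
  have key : ∀ f : ℝ → ℝ, Integrable f μ →
      Integrable (Gker A x f) (μ.prod μ) ∧
      Integrable (Bop A x μ f) μ ∧
      (∫⁻ z, ‖Bop A x μ f z‖₊ ∂μ) ≤ ENNReal.ofReal k * ∫⁻ v, ‖f v‖₊ ∂μ := by
    intro f hf
    have hmem : ∀ᵐ z ∂μ, z ∈ Set.Ioi (2*x) := by
      rw [hμ]; exact ae_restrict_mem measurableSet_Ioi
    have hGsm : AEStronglyMeasurable (Gker A x f) (μ.prod μ) := by
      have h1 : AEStronglyMeasurable (fun p : ℝ × ℝ => A x (p.2 + x - p.1) * f p.2)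
          (μ.prod μ) :=
        hKm.aestronglyMeasurable.mul hf.aestronglyMeasurable.comp_snd
      have h2 : MeasurableSet {p : ℝ × ℝ | p.1 < p.2} :=
        measurableSet_lt measurable_fst measurable_snd
      have hGe : Gker A x f
          = Set.indicator {p : ℝ × ℝ | p.1 < p.2}
              (fun p => A x (p.2 + x - p.1) * f p.2) := by
        funext p; by_cases h : p.1 < p.2 <;>
          simp [Gker, Set.indicator_apply, Set.mem_setOf_eq, h]
      rw [hGe]; exact h1.indicator h2
    have hGnorm : ∀ v : ℝ, (∫⁻ z, ‖Gker A x f (z, v)‖₊ ∂μ) ≤ ENNReal.ofReal k * ‖f v‖₊ := by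
      intro v
      have hb : ∀ᵐ z ∂μ, (‖Gker A x f (z, v)‖₊ : ℝ≥0∞)
          ≤ (if z < v then ENNReal.ofReal (c * σ ((v + 2*x - z)/2)) else 0) * ‖f v‖₊ := by
        filter_upwards [hmem] with z hz
        by_cases h : z < v
        · simp only [Gker, if_pos h]
          rw [show ((‖A x (v + x - z) * f v‖₊ : ℝ≥0∞))
              = (‖A x (v + x - z)‖₊ : ℝ≥0∞) * ‖f v‖₊ by rw [nnnorm_mul]; push_cast; ring]
          refine mul_le_mul_left ?_ _
          rw [← enorm_eq_nnnorm, Real.enorm_eq_ofReal_abs]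
          refine ENNReal.ofReal_le_ofReal ?_
          have hA := hAbound x (v + x - z) hx (by linarith)
          calc |A x (v + x - z)| ≤ c * σ ((x + (v + x - z)) / 2) := hA
            _ = c * σ ((v + 2*x - z)/2) := by rw [show (x + (v + x - z))/2 = (v + 2*x - z)/2 by ring]
        · simp [Gker, h]
      calc (∫⁻ z, ‖Gker A x f (z, v)‖₊ ∂μ)
          ≤ ∫⁻ z, (if z < v then ENNReal.ofReal (c * σ ((v + 2*x - z)/2)) else 0) * ‖f v‖₊ ∂μ :=
            lintegral_mono_ae hb
        _ = (∫⁻ z, (if z < v then ENNReal.ofReal (c * σ ((v + 2*x - z)/2)) else 0) ∂μ)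
              * ‖f v‖₊ := lintegral_mul_const' _ _ ENNReal.coe_ne_top
        _ ≤ ENNReal.ofReal k * ‖f v‖₊ := mul_le_mul_left (tailb v) _
    have hGfin : (∫⁻ p, ‖Gker A x f p‖₊ ∂(μ.prod μ))
        ≤ ENNReal.ofReal k * ∫⁻ v, ‖f v‖₊ ∂μ := by
      rw [show (∫⁻ p, (‖Gker A x f p‖₊ : ℝ≥0∞) ∂(μ.prod μ)) = ∫⁻ p, ‖Gker A x f p‖ₑ ∂(μ.prod μ) from rfl,
        lintegral_prod_symm _ hGsm.enorm]
      calc (∫⁻ v, ∫⁻ z, (‖Gker A x f (z, v)‖₊ : ℝ≥0∞) ∂μ ∂μ)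
          ≤ ∫⁻ v, ENNReal.ofReal k * ‖f v‖₊ ∂μ := lintegral_mono fun v => hGnorm v
        _ = ENNReal.ofReal k * ∫⁻ v, ‖f v‖₊ ∂μ :=
            lintegral_const_mul' _ _ ENNReal.ofReal_ne_top
    have hffin : (∫⁻ v, (‖f v‖₊ : ℝ≥0∞) ∂μ) < ⊤ := hf.2
    have hGint : Integrable (Gker A x f) (μ.prod μ) := by
      refine ⟨hGsm, ?_⟩
      exact lt_of_le_of_lt hGfin (ENNReal.mul_lt_top ENNReal.ofReal_lt_top hffin)
    refine ⟨hGint, ?_, ?_⟩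
    · have h := hGint.integral_prod_left
      exact h
    · calc (∫⁻ z, ‖Bop A x μ f z‖₊ ∂μ)
          ≤ ∫⁻ z, (∫⁻ v, ‖Gker A x f (z, v)‖₊ ∂μ) ∂μ :=
            lintegral_mono fun z => enorm_integral_le_lintegral_enorm _
        _ = ∫⁻ p, ‖Gker A x f p‖₊ ∂(μ.prod μ) := (lintegral_prod _ hGsm.enorm).symm
        _ ≤ _ := hGfin
  -- `Bop` only depends on the a.e. class
  have hBcongr : ∀ f f' : ℝ → ℝ, f =ᵐ[μ] f' → Bop A x μ f = Bop A x μ f' := by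
    intro f f' h; funext z
    refine integral_congr_ae ?_
    filter_upwards [h] with v hv
    by_cases hzv : z < v <;> simp [hzv, hv]
  -- a.e. linearity (subtraction)
  have hBsub : ∀ f f' : ℝ → ℝ, Integrable f μ → Integrable f' μ →
      Bop A x μ (f - f') =ᵐ[μ] Bop A x μ f - Bop A x μ f' := by
    intro f f' hf hf'
    have h1 := (key f hf).1.prod_right_ae
    have h2 := (key f' hf').1.prod_right_ae
    filter_upwards [h1, h2] with z hz1 hz2
    have he : (fun v => if z < v then A x (v + x - z) * (f - f') v else 0)
        = (fun v => Gker A x f (z, v) - Gker A x f' (z, v)) := by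
      funext v; by_cases h : z < v <;> simp [Gker, h, Pi.sub_apply] <;> ring
    show Bop A x μ (f - f') z = Bop A x μ f z - Bop A x μ f' z
    rw [show Bop A x μ (f - f') z
        = ∫ v, (Gker A x f (z, v) - Gker A x f' (z, v)) ∂μ by rw [Bop, he]]
    rw [integral_sub hz1 hz2]; rfl
  -- translation between `Bop` and the integral over `Ioi z` w.r.t. volume
  have hBvol : ∀ f : ℝ → ℝ, ∀ᵐ z ∂μ,
      Bop A x μ f z = ∫ v in Set.Ioi z, A x (v + x - z) * f v := by
    intro f
    have hmem : ∀ᵐ z ∂μ, z ∈ Set.Ioi (2*x) := by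
      rw [hμ]; exact ae_restrict_mem measurableSet_Ioi
    filter_upwards [hmem] with z hz
    have e0 : (fun v => if z < v then A x (v + x - z) * f v else 0)
        = (Set.Ioi z).indicator (fun v => A x (v + x - z) * f v) := by
      funext v; rw [Set.indicator_apply]
      by_cases h : z < v <;> simp [h, Set.mem_Ioi]
    have e1 : Bop A x μ f z = ∫ v in Set.Ioi z, A x (v + x - z) * f v ∂μ := by
      rw [Bop, e0, integral_indicator measurableSet_Ioi]
    rw [e1, hμ, Measure.restrict_restrict measurableSet_Ioi,
      Set.inter_eq_self_of_subset_left (Set.Ioi_subset_Ioi (le_of_lt hz))]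
  -- set up the contraction on L¹
  have hgi : Integrable g μ := hg
  have hcoe : ∀ F : Lp ℝ 1 μ, Integrable (⇑F) μ := fun F => L1.integrable_coeFn F
  set Φ : Lp ℝ 1 μ → Lp ℝ 1 μ :=
    fun F => hgi.toL1 g - Integrable.toL1 _ ((key _ (hcoe F)).2.1) with hΦ
  have hlip : ∀ F₁ F₂ : Lp ℝ 1 μ, dist (Φ F₁) (Φ F₂) ≤ k * dist F₁ F₂ := by
    intro F₁ F₂
    have hB₁ := (key _ (hcoe F₁)).2.1
    have hB₂ := (key _ (hcoe F₂)).2.1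
    have e : Φ F₁ - Φ F₂ = Integrable.toL1 _ hB₂ - Integrable.toL1 _ hB₁ := by
      rw [hΦ]; exact sub_sub_sub_cancel_left _ _ _
    rw [dist_eq_norm, e, ← Integrable.toL1_sub, Integrable.norm_toL1]
    simp only [edist_zero_right]
    have hae : (Bop A x μ (⇑F₂) - Bop A x μ (⇑F₁)) =ᵐ[μ] Bop A x μ (⇑F₂ - ⇑F₁) :=
      (hBsub _ _ (hcoe F₂) (hcoe F₁)).symm
    have hsub : (⇑F₂ - ⇑F₁ : ℝ → ℝ) =ᵐ[μ] ⇑(F₂ - F₁) := (Lp.coeFn_sub F₂ F₁).symm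
    have hBsubInt : Integrable (Bop A x μ (⇑F₂ - ⇑F₁)) μ := by
      have : Integrable (⇑F₂ - ⇑F₁ : ℝ → ℝ) μ := (hcoe F₂).sub (hcoe F₁)
      exact (key _ this).2.1
    have h1 : (∫⁻ a, (‖(Bop A x μ (⇑F₂) - Bop A x μ (⇑F₁)) a‖₊ : ℝ≥0∞) ∂μ)
        = ∫⁻ a, (‖Bop A x μ (⇑F₂ - ⇑F₁) a‖₊ : ℝ≥0∞) ∂μ := by
      refine lintegral_congr_ae ?_
      filter_upwards [hae] with a ha; rw [ha]
    have h2 : (∫⁻ a, (‖Bop A x μ (⇑F₂ - ⇑F₁) a‖₊ : ℝ≥0∞) ∂μ)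
        ≤ ENNReal.ofReal k * ∫⁻ v, (‖(⇑F₂ - ⇑F₁ : ℝ → ℝ) v‖₊ : ℝ≥0∞) ∂μ :=
      (key _ ((hcoe F₂).sub (hcoe F₁))).2.2
    have h3 : (∫⁻ v, (‖(⇑F₂ - ⇑F₁ : ℝ → ℝ) v‖₊ : ℝ≥0∞) ∂μ)
        = ∫⁻ v, (‖(⇑(F₂ - F₁)) v‖₊ : ℝ≥0∞) ∂μ := by
      refine lintegral_congr_ae ?_
      filter_upwards [hsub] with a ha; rw [ha]
    have hN : (∫⁻ v, (‖(⇑(F₂ - F₁)) v‖₊ : ℝ≥0∞) ∂μ) < ⊤ := (hcoe (F₂ - F₁)).2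
    have h4 : (∫⁻ a, (‖(Bop A x μ (⇑F₂) - Bop A x μ (⇑F₁)) a‖₊ : ℝ≥0∞) ∂μ)
        ≤ ENNReal.ofReal k * ∫⁻ v, (‖(⇑(F₂ - F₁)) v‖₊ : ℝ≥0∞) ∂μ := by
      rw [h1, ← h3]; exact h2
    have h5 := ENNReal.toReal_mono
      (ENNReal.mul_lt_top ENNReal.ofReal_lt_top hN).ne h4
    rw [ENNReal.toReal_mul, ENNReal.toReal_ofReal hknn] at h5
    have h6 : dist F₁ F₂ = (∫⁻ v, (‖(⇑(F₂ - F₁)) v‖₊ : ℝ≥0∞) ∂μ).toReal := by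
      rw [dist_comm, dist_eq_norm, L1.norm_def]; rfl
    rw [h6]
    exact h5
  have hcontr : ContractingWith k.toNNReal Φ := by
    constructor
    · rw [← NNReal.coe_lt_coe, Real.coe_toNNReal _ hknn, NNReal.coe_one]
      exact hk1
    · refine LipschitzWith.of_dist_le_mul ?_
      intro F₁ F₂
      rw [Real.coe_toNNReal _ hknn]
      exact hlip F₁ F₂
  haveI : Nonempty (Lp ℝ 1 μ) := ⟨0⟩
  set FL : Lp ℝ 1 μ := ContractingWith.fixedPoint Φ hcontr with hFL
  have hfix : Φ FL = FL := hcontr.fixedPoint_isFixedPt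
  -- the fixed point satisfies the equation
  have hΦcoe : ∀ F : Lp ℝ 1 μ,
      ⇑(Φ F) =ᵐ[μ] fun z => g z - Bop A x μ (⇑F) z := by
    intro F
    have hB := (key _ (hcoe F)).2.1
    filter_upwards [Lp.coeFn_sub (hgi.toL1 g) (Integrable.toL1 _ hB),
      hgi.coeFn_toL1, hB.coeFn_toL1] with z e1 e2 e3
    rw [hΦ]
    show (⇑(hgi.toL1 g - Integrable.toL1 _ hB)) z = g z - Bop A x μ (⇑F) z
    rw [e1, Pi.sub_apply, e2, e3]
  have h0 : ⇑FL =ᵐ[μ] fun z => g z - Bop A x μ (⇑FL) z := by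
    have := hΦcoe FL
    rw [hfix] at this
    exact this
  refine ⟨⇑FL, hcoe FL, ?_, ?_⟩
  · filter_upwards [h0, hBvol ⇑FL] with z h0z hBz
    rw [← hBz, h0z]; ring
  · intro F' hF'i hF'eq
    have hF'μ : Integrable F' μ := hF'i
    have h0' : F' =ᵐ[μ] fun z => g z - Bop A x μ F' z := by
      filter_upwards [hF'eq, hBvol F'] with z h1 h2
      rw [h2]; linarith
    set F'L : Lp ℝ 1 μ := hF'μ.toL1 F' with hF'Ldef
    have hcoeF' : ⇑F'L =ᵐ[μ] F' := hF'μ.coeFn_toL1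
    have hBeq : Bop A x μ (⇑F'L) = Bop A x μ F' := hBcongr _ _ hcoeF'
    have hfixF' : Φ F'L = F'L := by
      apply Lp.ext
      filter_upwards [hΦcoe F'L, h0', hcoeF'] with z e1 e4 e5
      rw [e1, hBeq, e5, ← e4]
    have hEq : F'L = FL := hcontr.fixedPoint_unique hfixF'
    have : ⇑F'L =ᵐ[μ] ⇑FL := by rw [hEq]
    exact hcoeF'.symm.trans this

/-- step `A ⇒ F` of the inversion scheme: there is `x₀ ≥ 0` such that for
every `x ≥ x₀` one has `2c ∫_x^∞ σ(t) dt < 1`, and for every `g ∈ L¹(2x,∞)` the equation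
`F(z) + ∫_z^∞ A(x, v+x−z) F(v) dv = g(z)` (a.e. `z ≥ 2x`) has exactly one solution
`F ∈ L¹(2x,∞)` (up to a.e. equality). -/
theorem A_to_F_unique_solvability
    (σ : ℝ → ℝ) (hσnn : ∀ t > (0 : ℝ), 0 ≤ σ t)
    (hσmono : AntitoneOn σ (Set.Ioi 0))
    (hσint : IntegrableOn σ (Set.Ioi 0))
    (c : ℝ) (hc : 0 < c)
    (A : ℝ → ℝ → ℝ) (hAmeas : Measurable (Function.uncurry A))
    (hAbound : ∀ x y : ℝ, 0 ≤ x → x ≤ y → |A x y| ≤ c * σ ((x + y) / 2)) :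
    ∃ x₀ : ℝ, 0 ≤ x₀ ∧ ∀ x : ℝ, x₀ ≤ x →
      (2 * c * (∫ t in Set.Ioi x, σ t) < 1) ∧
      ∀ g : ℝ → ℝ, IntegrableOn g (Set.Ioi (2 * x)) →
        ∃ F : ℝ → ℝ, IntegrableOn F (Set.Ioi (2 * x)) ∧
          (∀ᵐ z ∂(volume.restrict (Set.Ioi (2 * x))),
            F z + ∫ v in Set.Ioi z, A x (v + x - z) * F v = g z) ∧
          ∀ F' : ℝ → ℝ, IntegrableOn F' (Set.Ioi (2 * x)) →
            (∀ᵐ z ∂(volume.restrict (Set.Ioi (2 * x))),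
              F' z + ∫ v in Set.Ioi z, A x (v + x - z) * F' v = g z) →
            F' =ᵐ[volume.restrict (Set.Ioi (2 * x))] F := by
  -- the tail integral tends to `0`
  have hlim : Tendsto (fun b : ℝ => ∫ t in (0:ℝ)..b, σ t) atTop
      (nhds (∫ t in Set.Ioi 0, σ t)) :=
    MeasureTheory.intervalIntegral_tendsto_integral_Ioi 0 hσint tendsto_id
  have hdecomp : ∀ x : ℝ, 0 ≤ x →
      (∫ t in Set.Ioi x, σ t) = (∫ t in Set.Ioi 0, σ t) - ∫ t in (0:ℝ)..x, σ t := by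
    intro x hx
    have hunion : Set.Ioc 0 x ∪ Set.Ioi x = Set.Ioi 0 := Set.Ioc_union_Ioi_eq_Ioi hx
    have hdisj : Disjoint (Set.Ioc 0 x) (Set.Ioi x) := Set.Ioc_disjoint_Ioi le_rfl
    have hIoc : IntegrableOn σ (Set.Ioc 0 x) := hσint.mono_set Set.Ioc_subset_Ioi_self
    have hIoi : IntegrableOn σ (Set.Ioi x) := hσint.mono_set (Set.Ioi_subset_Ioi hx)
    have := MeasureTheory.setIntegral_union hdisj measurableSet_Ioi hIoc hIoi
    rw [hunion] at this
    rw [intervalIntegral.integral_of_le hx, this]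
    ring
  have htendsto : Tendsto (fun x : ℝ => 2 * c * (∫ t in Set.Ioi x, σ t)) atTop (nhds 0) := by
    have h1 : Tendsto (fun x : ℝ => (∫ t in Set.Ioi 0, σ t) - ∫ t in (0:ℝ)..x, σ t)
        atTop (nhds 0) := by
      have := tendsto_const_nhds (x := (∫ t in Set.Ioi 0, σ t)) (f := atTop (α := ℝ))
      have h2 := this.sub hlim
      simpa using h2
    have h3 : Tendsto (fun x : ℝ => ∫ t in Set.Ioi x, σ t) atTop (nhds 0) := by
      refine h1.congr' ?_
      filter_upwards [eventually_ge_atTop (0:ℝ)] with x hx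
      exact (hdecomp x hx).symm
    have h4 := h3.const_mul (2 * c)
    simpa using h4
  have hev : ∀ᶠ x : ℝ in atTop, 2 * c * (∫ t in Set.Ioi x, σ t) < 1 :=
    htendsto.eventually_lt_const (by norm_num)
  obtain ⟨a, ha⟩ := (hev.and (eventually_ge_atTop (0:ℝ))).exists_forall_of_atTop
  refine ⟨max a 0, le_max_right a 0, fun x hx => ?_⟩
  have hxa : a ≤ x := le_trans (le_max_left a 0) hx
  obtain ⟨hk1, hx0⟩ := ha x hxa
  exact ⟨hk1, A_to_F_core σ hσnn hσint c hc A hAmeas hAbound x hx0 hk1⟩
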